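/- Let a > 0 and b ≠ 0 be real numbers, set c = 6a/b, and let C₀ ∈ ℝ. Then the function v₀(τ) = −c·cosh⁻²((√a)·τ/2 + C₀) satisfies, for every τ ∈ ℝ, the second-order ordinary differential equation (c − v₀(τ))·v₀''(τ) − (1/2)·(v₀'(τ))² − a·c·v₀(τ) + (1/3)·b·v₀(τ)³ = 0. -/

import Mathlib

private lemma soliton_key (X Y c s a b : ℝ) (hX : X ≠ 0) (h1 : X^2 = 1+Y^2)
    (h2 : s^2 = a) (h3 : b*c = 6*a) :
    (c - (-c/X^2)) * (c*s*(s/2)*(X^2-3*Y^2)/X^4) - (1/2)*(c*s*Y/X^3)^2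
      - a*c*(-c/X^2) + (1/3)*b*(-c/X^2)^3 = 0 := by
  field_simp
  linear_combination (3*c^2*s^2*(3*X^2+4)) * h1 + (-(6*c^2*X^4-12*c^2)) * h2 + (-2*c^2) * h3

/-- The soliton profile `v₀(τ) = −c cosh⁻²(√a τ/2 + C₀)`, with `a > 0`, `b ≠ 0`,
`c = 6a/b`, satisfies the once-integrated profile equation
`(c − v₀)v₀'' − (1/2)(v₀')² − a c v₀ + (1/3) b v₀³ = 0` on all of `ℝ`. -/
theorem soliton_profile_second_order_ODE (a b C₀ : ℝ) (ha : 0 < a) (hb : b ≠ 0)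
    (c : ℝ) (hc : c = 6 * a / b) (v : ℝ → ℝ)
    (hv : v = fun τ => -c / (Real.cosh (Real.sqrt a * τ / 2 + C₀)) ^ 2) :
    ∀ τ : ℝ,
      (c - v τ) * iteratedDeriv 2 v τ - (1 / 2) * (deriv v τ) ^ 2
        - a * c * v τ + (1 / 3) * b * (v τ) ^ 3 = 0 := by
  intro τ
  set s := Real.sqrt a with hs
  have hs2 : s ^ 2 = a := Real.sq_sqrt ha.le
  set g : ℝ → ℝ := fun τ => s * τ / 2 + C₀ with hg
  have hgd : ∀ x, HasDerivAt g (s / 2) x := by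
    intro x
    have h := (((hasDerivAt_id x).const_mul s).div_const 2).add_const C₀
    exact h.congr_deriv (by ring)
  have hcosh : ∀ x, Real.cosh (g x) ≠ 0 := fun x => (Real.cosh_pos (g x)).ne'
  have hv1 : ∀ x, HasDerivAt v (c * s * Real.sinh (g x) / Real.cosh (g x) ^ 3) x := by
    intro x
    have hden : HasDerivAt (fun τ => Real.cosh (g τ) ^ 2)
        (2 * Real.cosh (g x) ^ 1 * (Real.sinh (g x) * (s / 2))) x :=
      ((hgd x).cosh).pow 2
    have h := (hasDerivAt_const x (-c)).div hden (pow_ne_zero 2 (hcosh x))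
    rw [hv]
    refine h.congr_deriv ?_
    have h1 : Real.cosh (g x) ≠ 0 := hcosh x
    field_simp
    ring
  have hdv : deriv v = fun x => c * s * Real.sinh (g x) / Real.cosh (g x) ^ 3 := by
    funext x; exact (hv1 x).deriv
  have hv2 : HasDerivAt (deriv v)
      (c * s * (s / 2) * (Real.cosh (g τ) ^ 2 - 3 * Real.sinh (g τ) ^ 2)
        / Real.cosh (g τ) ^ 4) τ := by
    rw [hdv]
    have hnum : HasDerivAt (fun x => c * s * Real.sinh (g x))
        (c * s * (Real.cosh (g τ) * (s / 2))) τ := ((hgd τ).sinh).const_mul (c * s)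
    have hden : HasDerivAt (fun x => Real.cosh (g x) ^ 3)
        (3 * Real.cosh (g τ) ^ 2 * (Real.sinh (g τ) * (s / 2))) τ := ((hgd τ).cosh).pow 3
    have h := hnum.div hden (pow_ne_zero 3 (hcosh τ))
    refine h.congr_deriv ?_
    have h1 : Real.cosh (g τ) ≠ 0 := hcosh τ
    field_simp
  have hiter : iteratedDeriv 2 v τ
      = c * s * (s / 2) * (Real.cosh (g τ) ^ 2 - 3 * Real.sinh (g τ) ^ 2)
        / Real.cosh (g τ) ^ 4 := by
    rw [iteratedDeriv_succ, iteratedDeriv_one]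
    exact hv2.deriv
  have hvτ : v τ = -c / Real.cosh (g τ) ^ 2 := by rw [hv]
  have hdvτ : deriv v τ = c * s * Real.sinh (g τ) / Real.cosh (g τ) ^ 3 := by rw [hdv]
  have hch : Real.cosh (g τ) ^ 2 = 1 + Real.sinh (g τ) ^ 2 := by
    have := Real.cosh_sq (g τ); linarith
  have hbc : b * c = 6 * a := by rw [hc]; field_simp
  rw [hiter, hvτ, hdvτ]
  have h := soliton_key (Real.cosh (g τ)) (Real.sinh (g τ)) c s a b (hcosh τ) hch hs2 hbc
  linarith [h]
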